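/- Let h ≥ 2, let s, t ∈ ℤ with gcd(h, s−t) = 1, let Y ⊆ ℤ be infinite with infinite gaps, and let X = ℤ \ Y, A = {s} ∪ {hx + t : x ∈ X}. Then there is a finite set F ⊆ ℤ with F ∩ {(h−1)s + hy + t : y ∈ Y} = ∅ such that ℤ \ hA = F ∪ {(h−1)s + hy + t : y ∈ Y}. -/

import Mathlib

def sumset (h : ℕ) (A : Set ℤ) : Set ℤ :=
  {n | ∃ f : Fin h → ℤ, (∀ i, f i ∈ A) ∧ n = ∑ i, f i}

def InfiniteGaps (Y : Set ℤ) : Prop :=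
  ∀ C : ℤ, 0 < C →
    {p : ℤ × ℤ | p.1 ∈ Y ∧ p.2 ∈ Y ∧ p.1 ≠ p.2 ∧ |p.1 - p.2| ≤ C}.Finite

/-- Every integer is the sum of two non-elements of a set with infinite gaps. -/
lemma two_sum_aux (Y : Set ℤ) (hYgaps : InfiniteGaps Y) (N : ℤ) :
    ∃ a b : ℤ, a ∉ Y ∧ b ∉ Y ∧ a + b = N := by
  have hP := hYgaps 2 (by norm_num)
  have hQ : (Prod.fst '' {p : ℤ × ℤ | p.1 ∈ Y ∧ p.2 ∈ Y ∧ p.1 ≠ p.2 ∧ |p.1 - p.2| ≤ 2}).Finite :=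
    hP.image _
  obtain ⟨ub, hub⟩ := hQ.bddAbove
  obtain ⟨lb, hlb⟩ := hQ.bddBelow
  have key : ∀ a b : ℤ, a ∈ Y → b ∈ Y → a ≠ b → |a - b| ≤ 2 → lb ≤ a ∧ a ≤ ub := by
    intro a b ha hb hab hd
    have hmem : a ∈ Prod.fst '' {p : ℤ × ℤ | p.1 ∈ Y ∧ p.2 ∈ Y ∧ p.1 ≠ p.2 ∧ |p.1 - p.2| ≤ 2} :=
      ⟨(a, b), ⟨ha, hb, hab, hd⟩, rfl⟩
    exact ⟨hlb hmem, hub hmem⟩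
  set n : ℤ := max ub (N - lb) + 1 with hn
  have hn1 : ub < n := by have := le_max_left ub (N - lb); omega
  have hn2 : N - lb < n := by have := le_max_right ub (N - lb); omega
  by_contra hcon
  push_neg at hcon
  have cover : ∀ k : ℤ, k ∉ Y → (N - k) ∈ Y := by
    intro k hk
    by_contra h'
    exact hcon k (N - k) hk h' (by ring)
  have hitY : ∀ k k' : ℤ, n ≤ k → k ≤ n + 2 → n ≤ k' → k' ≤ n + 2 → k ≠ k' →
      k ∈ Y → k' ∈ Y → False := by
    intro k k' h1 h2 h3 h4 h5 h6 h7
    have := key k k' h6 h7 h5 (abs_le.mpr ⟨by omega, by omega⟩)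
    omega
  have mir : ∀ k k' : ℤ, n ≤ k → k ≤ n + 2 → n ≤ k' → k' ≤ n + 2 → k ≠ k' →
      k ∉ Y → k' ∉ Y → False := by
    intro k k' h1 h2 h3 h4 h5 h6 h7
    have := key (N - k) (N - k') (cover k h6) (cover k' h7) (by omega)
      (abs_le.mpr ⟨by omega, by omega⟩)
    omega
  by_cases hY0 : n ∈ Y
  · by_cases hY1 : (n + 1) ∈ Y
    · exact hitY n (n + 1) (by omega) (by omega) (by omega) (by omega) (by omega) hY0 hY1
    · by_cases hY2 : (n + 2) ∈ Y
      · exact hitY n (n + 2) (by omega) (by omega) (by omega) (by omega) (by omega) hY0 hY2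
      · exact mir (n + 1) (n + 2) (by omega) (by omega) (by omega) (by omega) (by omega) hY1 hY2
  · by_cases hY1 : (n + 1) ∈ Y
    · by_cases hY2 : (n + 2) ∈ Y
      · exact hitY (n + 1) (n + 2) (by omega) (by omega) (by omega) (by omega) (by omega) hY1 hY2
      · exact mir n (n + 2) (by omega) (by omega) (by omega) (by omega) (by omega) hY0 hY2
    · exact mir n (n + 1) (by omega) (by omega) (by omega) (by omega) (by omega) hY0 hY1

/-- Every integer is a sum of `k ≥ 2` elements of `X`. -/
lemma ksum_aux (X : Set ℤ) (htwo : ∀ N : ℤ, ∃ a b : ℤ, a ∈ X ∧ b ∈ X ∧ a + b = N)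
    (k : ℕ) (hk : 2 ≤ k) (N : ℤ) :
    ∃ g : Fin k → ℤ, (∀ i, g i ∈ X) ∧ ∑ i, g i = N := by
  obtain ⟨m, rfl⟩ : ∃ m, k = m + 2 := ⟨k - 2, by omega⟩
  obtain ⟨x0, _, hx0, _⟩ := htwo 0
  obtain ⟨a, b, ha, hb, hab⟩ := htwo (N - m * x0)
  refine ⟨Fin.cons a (Fin.cons b fun _ => x0), ?_, ?_⟩
  · intro i
    refine Fin.cases ha (fun i => ?_) i
    exact Fin.cases hb (fun _ => hx0) i
  · rw [show (m + 2) = (m + 1) + 1 from rfl] at *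
    rw [Fin.sum_cons, Fin.sum_cons]
    simp only [Finset.sum_const, Finset.card_univ, Fintype.card_fin, nsmul_eq_mul]
    linarith

/-- Membership in the h-fold sumset from j copies of s and k elements of X. -/
lemma mem_sum_aux (h : ℕ) (s t : ℤ) (X A : Set ℤ)
    (hA : A = {s} ∪ {m : ℤ | ∃ x ∈ X, m = (h : ℤ) * x + t})
    (j k : ℕ) (hjk : j + k = h) (g : Fin k → ℤ) (hg : ∀ i, g i ∈ X) :
    ((j : ℤ) * s + (h : ℤ) * (∑ i, g i) + (k : ℤ) * t) ∈ sumset h A := by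
  subst hA
  subst hjk
  refine ⟨Fin.append (fun _ : Fin j => s) (fun i => ((j + k : ℕ) : ℤ) * g i + t), ?_, ?_⟩
  · intro i
    refine Fin.addCases (fun i => ?_) (fun i => ?_) i
    · rw [Fin.append_left]; exact Or.inl rfl
    · rw [Fin.append_right]; exact Or.inr ⟨g i, hg i, rfl⟩
  · rw [Fin.sum_univ_add]
    simp only [Fin.append_left, Fin.append_right, Finset.sum_const, Finset.card_univ,
      Fintype.card_fin, nsmul_eq_mul, Finset.sum_add_distrib, ← Finset.mul_sum]
    push_cast
    ring

theorem stmt6 (h : ℕ) (hh : 2 ≤ h) (s t : ℤ)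
    (hgcd : Int.gcd (h : ℤ) (s - t) = 1)
    (Y : Set ℤ) (hYinf : Y.Infinite) (hYgaps : InfiniteGaps Y)
    (X : Set ℤ) (hX : X = Yᶜ)
    (A : Set ℤ) (hA : A = {s} ∪ {m : ℤ | ∃ x ∈ X, m = (h : ℤ) * x + t}) :
    ∃ F : Set ℤ, F.Finite ∧
      F ∩ {m : ℤ | ∃ y ∈ Y, m = ((h : ℤ) - 1) * s + (h : ℤ) * y + t} = ∅ ∧
      (sumset h A)ᶜ = F ∪ {m : ℤ | ∃ y ∈ Y, m = ((h : ℤ) - 1) * s + (h : ℤ) * y + t} := by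
  classical
  have hh0 : (0 : ℤ) < (h : ℤ) := by exact_mod_cast Nat.lt_of_lt_of_le (by norm_num) hh
  have hcop : IsCoprime ((h : ℤ)) (s - t) := Int.isCoprime_iff_gcd_eq_one.mpr hgcd
  have htwo : ∀ N : ℤ, ∃ a b : ℤ, a ∈ X ∧ b ∈ X ∧ a + b = N := by
    intro N
    obtain ⟨a, b, ha, hb, hab⟩ := two_sum_aux Y hYgaps N
    exact ⟨a, b, by rw [hX]; exact ha, by rw [hX]; exact hb, hab⟩
  -- (a) every element of the exceptional class is NOT in the sumset
  have dir_a : ∀ y ∈ Y, ((h : ℤ) - 1) * s + (h : ℤ) * y + t ∉ sumset h A := by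
    intro y hy hmem
    obtain ⟨f, hf, hsum⟩ := hmem
    set J : Finset (Fin h) := Finset.univ.filter (fun i => f i = s) with hJ
    set g : Fin h → ℤ := fun i => (f i - t) / (h : ℤ) with hgdef
    have hg : ∀ i ∈ Jᶜ, g i ∈ X ∧ f i = (h : ℤ) * g i + t := by
      intro i hi
      have hiJ : f i ≠ s := by
        simp only [hJ, Finset.mem_compl, Finset.mem_filter, Finset.mem_univ, true_and] at hi
        exact hi
      rcases hA ▸ hf i with h1 | ⟨x, hxX, hxeq⟩
      · exact absurd h1 hiJ
      · have : g i = x := by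
          rw [hgdef]
          simp only [hxeq]
          rw [add_sub_cancel_right, Int.mul_ediv_cancel_left _ (by omega : (h:ℤ) ≠ 0)]
        rw [this]
        exact ⟨hxX, hxeq⟩
    have hcard : J.card + Jᶜ.card = h := by
      have := Finset.card_add_card_compl J
      simpa [Fintype.card_fin] using this
    have hsum2 : ∑ i, f i = (J.card : ℤ) * s + (h : ℤ) * (∑ i ∈ Jᶜ, g i) + (Jᶜ.card : ℤ) * t := by
      rw [← Finset.sum_add_sum_compl J f]
      have e1 : ∑ i ∈ J, f i = (J.card : ℤ) * s := by
        rw [Finset.sum_congr rfl (fun i hi => by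
          simp only [hJ, Finset.mem_filter] at hi; exact hi.2)]
        simp [mul_comm]
      have e2 : ∑ i ∈ Jᶜ, f i = (h : ℤ) * (∑ i ∈ Jᶜ, g i) + (Jᶜ.card : ℤ) * t := by
        rw [Finset.sum_congr rfl (fun i hi => (hg i hi).2)]
        rw [Finset.sum_add_distrib, ← Finset.mul_sum]
        simp [mul_comm]
      rw [e1, e2]; ring
    rw [hsum2] at hsum
    set j : ℕ := J.card
    set Ssum : ℤ := ∑ i ∈ Jᶜ, g i
    have hkey : ((h : ℤ) - 1 - j) * (s - t) = (h : ℤ) * (Ssum - y) := by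
      have hc : (Jᶜ.card : ℤ) = (h : ℤ) - j := by push_cast [← hcard]; ring
      rw [hc] at hsum
      linear_combination hsum
    have hdvd : (h : ℤ) ∣ ((h : ℤ) - 1 - j) := by
      refine hcop.dvd_of_dvd_mul_right ⟨Ssum - y, ?_⟩
      linear_combination hkey
    have hjle : (j : ℤ) ≤ (h : ℤ) := by
      exact_mod_cast Nat.le_trans (Finset.card_le_univ J) (by simp)
    have hz : (h : ℤ) - 1 - j = 0 :=
      Int.eq_zero_of_abs_lt_dvd hdvd (abs_lt.mpr ⟨by omega, by omega⟩)
    have hjh : j = h - 1 := by omega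
    have hc1 : Jᶜ.card = 1 := by omega
    obtain ⟨i0, hi0⟩ := Finset.card_eq_one.mp hc1
    have hS2 : Ssum = g i0 := by rw [show Ssum = ∑ i ∈ Jᶜ, g i from rfl, hi0, Finset.sum_singleton]
    have hgy : g i0 = y := by
      have : (h : ℤ) * (Ssum - y) = 0 := by rw [← hkey, hz]; ring
      have := mul_eq_zero.mp this
      rcases this with h' | h'
      · omega
      · rw [hS2] at h'; linarith
    have hi0mem : i0 ∈ Jᶜ := by rw [hi0]; exact Finset.mem_singleton_self i0
    have := (hg i0 hi0mem).1
    rw [hgy, hX] at this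
    exact this hy
  -- (b) everything not in the exceptional class IS in the sumset
  have dir_b : ∀ m : ℤ, (¬ ∃ y ∈ Y, m = ((h : ℤ) - 1) * s + (h : ℤ) * y + t) →
      m ∈ sumset h A := by
    intro m hS
    push_neg at hS
    have hbez : (1 : ℤ) = (h : ℤ) * Int.gcdA (h : ℤ) (s - t) + (s - t) * Int.gcdB (h : ℤ) (s - t) := by
      have := Int.gcd_eq_gcd_ab ((h : ℤ)) (s - t)
      rw [hgcd] at this
      exact_mod_cast this
    set B : ℤ := Int.gcdB (h : ℤ) (s - t)
    set a : ℤ := Int.gcdA (h : ℤ) (s - t)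
    set jz : ℤ := (m * B) % (h : ℤ) with hjzdef
    have hz0 : 0 ≤ jz := Int.emod_nonneg _ (by omega)
    have hz1 : jz < (h : ℤ) := Int.emod_lt_of_pos _ hh0
    have eq1 : (h : ℤ) * (m * B / (h : ℤ)) + jz = m * B := Int.mul_ediv_add_emod _ _
    have hdvd : (h : ℤ) ∣ m - jz * (s - t) :=
      ⟨m * a + (m * B / (h : ℤ)) * (s - t), by linear_combination m * hbez - (s - t) * eq1⟩
    set j : ℕ := jz.toNat with hjdef
    have hjz : (j : ℤ) = jz := Int.toNat_of_nonneg hz0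
    have hjlt : j < h := by omega
    by_cases hk1 : j = h - 1
    · -- k = 1 case
      have hjzval : jz = (h : ℤ) - 1 := by omega
      have hdvd2 : (h : ℤ) ∣ m - (((h : ℤ) - 1) * s + t) := by
        have h2 : (h : ℤ) ∣ (h : ℤ) * t := ⟨t, rfl⟩
        have := Int.dvd_sub hdvd h2
        rw [hjzval] at this
        convert this using 1
        ring
      obtain ⟨z, hzeq⟩ := hdvd2
      have hm : m = ((h : ℤ) - 1) * s + (h : ℤ) * z + t := by linarith
      have hzX : z ∈ X := by
        rw [hX]
        intro hzY
        exact hS z hzY hm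
      have := mem_sum_aux h s t X A hA (h - 1) 1 (by omega) (fun _ => z) (fun _ => hzX)
      have hsum1 : (∑ _i : Fin 1, z) = z := by simp
      rw [hsum1] at this
      have hcast : ((h - 1 : ℕ) : ℤ) = (h : ℤ) - 1 := by
        have : (1 : ℕ) ≤ h := by omega
        push_cast [Nat.cast_sub this]
        ring
      rw [hcast] at this
      have hfinal : (((h : ℤ) - 1) * s + (h : ℤ) * z + ((1 : ℕ) : ℤ) * t) = m := by
        push_cast; linarith
      rw [← hfinal]
      exact this
    · -- k ≥ 2 case
      set k : ℕ := h - j with hkdef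
      have hk2 : 2 ≤ k := by omega
      have hjk : j + k = h := by omega
      have hdvd3 : (h : ℤ) ∣ m - (j : ℤ) * s - (k : ℤ) * t := by
        have h2 : (h : ℤ) ∣ (h : ℤ) * t := ⟨t, rfl⟩
        have h3 := Int.dvd_sub hdvd h2
        have hkc : (k : ℤ) = (h : ℤ) - j := by
          rw [hkdef]
          push_cast [Nat.cast_sub (le_of_lt hjlt)]
          ring
        convert h3 using 1
        rw [hkc, hjz]
        ring
      obtain ⟨Ssum, hS2eq⟩ := hdvd3
      obtain ⟨g, hgX, hgsum⟩ := ksum_aux X htwo k hk2 Ssum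
      have hmem := mem_sum_aux h s t X A hA j k hjk g hgX
      rw [hgsum] at hmem
      have hmval : ((j : ℤ) * s + (h : ℤ) * Ssum + (k : ℤ) * t) = m := by linarith
      rw [← hmval]
      exact hmem
  refine ⟨∅, Set.finite_empty, by simp, ?_⟩
  rw [Set.empty_union]
  ext m
  simp only [Set.mem_compl_iff, Set.mem_setOf_eq]
  constructor
  · intro hm
    by_contra hS
    exact hm (dir_b m hS)
  · rintro ⟨y, hy, rfl⟩
    exact dir_a y hy
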